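/- arXiv:1407.0940 — 9 statements merged into one kernel-verified Lean document; each statement's English description precedes it below -/
import Mathlib

section
/- Let α be an ordinal, n a positive natural number, and i < n. If f is an order-embedding of α into itself that is the identity on the set of ordinals β < α of the form β = γ + i + k·n for some limit ordinal γ and some k < ω, then f is the identity on all of α. -/
open Ordinal

/-- If an order-embedding of an ordinal `α` into itself is the identity on the set of
ordinals `β < α` of the form `β = γ + i + k·n` (`γ` a limit ordinal or `0`, `k < ω`),
where `i < n`, then it is the identity on all of `α`. -/
theorem eq_id_of_fix_residue_class (α : Ordinal) (n : ℕ) (hn : 0 < n) (i : ℕ) (hi : i < n)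
    (f : {β : Ordinal // β < α} → {β : Ordinal // β < α}) (hf : StrictMono f)
    (hid : ∀ b : {β : Ordinal // β < α},
      (∃ γ : Ordinal, (γ = 0 ∨ Order.IsSuccLimit γ) ∧ ∃ k : ℕ, b.1 = γ + (i : Ordinal) + (k * n : ℕ)) →
      f b = b) :
    ∀ b, f b = b := by
  intro b
  by_contra hne
  have hgt : b.1 < (f b).1 := lt_of_le_of_ne hf.le_apply (fun h => hne (Subtype.ext h.symm))
  -- joint induction: for all d, b + d < α and f (b + d) > b + d
  have key : ∀ d : ℕ, ∃ h : b.1 + (d : Ordinal) < α,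
      b.1 + (d : Ordinal) < (f ⟨b.1 + d, h⟩).1 := by
    intro d
    induction d with
    | zero =>
      refine ⟨by simpa using b.2, ?_⟩
      simpa using hgt
    | succ d ih =>
      obtain ⟨h, hlt⟩ := ih
      have hsucc : b.1 + (d : Ordinal) + 1 ≤ (f ⟨b.1 + d, h⟩).1 := Order.add_one_le_of_lt hlt
      have hα : b.1 + ((d + 1 : ℕ) : Ordinal) < α := by
        push_cast
        rw [← add_assoc]
        exact lt_of_le_of_lt hsucc (f ⟨b.1 + d, h⟩).2
      refine ⟨hα, ?_⟩
      have hmono : f ⟨b.1 + d, h⟩ < f ⟨b.1 + ((d + 1 : ℕ) : Ordinal), hα⟩ := by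
        apply hf
        show b.1 + (d : Ordinal) < b.1 + ((d + 1 : ℕ) : Ordinal)
        push_cast
        rw [← add_assoc]
        exact lt_add_one _
      calc b.1 + ((d + 1 : ℕ) : Ordinal) = b.1 + (d : Ordinal) + 1 := by push_cast; rw [add_assoc]
        _ ≤ (f ⟨b.1 + d, h⟩).1 := hsucc
        _ < _ := hmono
  -- decompose b = γ + m with γ limit or zero, m : ℕ
  set γ := ω * (b.1 / ω) with hγ
  have hdm : γ + b.1 % ω = b.1 := Ordinal.div_add_mod b.1 ω
  obtain ⟨m, hm⟩ : ∃ m : ℕ, b.1 % ω = m := Ordinal.lt_omega0.1 (Ordinal.mod_lt b.1 omega0_ne_zero)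
  have hγlim : γ = 0 ∨ Order.IsSuccLimit γ := by
    rcases eq_or_ne (b.1 / ω) 0 with h0 | h0
    · left; simp [hγ, h0]
    · right; exact Ordinal.isSuccLimit_mul_left Ordinal.isSuccLimit_omega0 (pos_iff_ne_zero.2 h0)
  -- class point: γ + i + (m * n) ; it is b + d with d = i + m*n - m
  have hge : m ≤ i + m * n := le_trans (Nat.le_mul_of_pos_right m hn) (Nat.le_add_left _ _)
  set d : ℕ := i + m * n - m with hd
  have hmd : m + d = i + m * n := by omega
  have hc : b.1 + (d : Ordinal) = γ + (i : Ordinal) + ((m * n : ℕ) : Ordinal) := by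
    rw [← hdm, hm, add_assoc, add_assoc]
    congr 1
    rw [← Nat.cast_add, hmd]
    push_cast
    ring
  obtain ⟨hα, hlt⟩ := key d
  have hfix := hid ⟨b.1 + d, hα⟩ ⟨γ, hγlim, m, hc⟩
  rw [hfix] at hlt
  exact lt_irrefl _ hlt
end

section
/- Let α be a limit ordinal, n a positive natural number, and i < n. If I is an interval of α containing every ordinal β < α of the form β = γ + i + k·n (γ a limit ordinal, k < ω), then I contains every ordinal δ with i ≤ δ < α. -/
open Ordinal

/-- If `α` is a limit ordinal, `i < n`, and `I` is an interval of `α` containing every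
`β < α` of the form `β = γ + i + k·n` (`γ` a limit ordinal or `0`, `k < ω`), then `I`
contains every ordinal `δ` with `i ≤ δ < α`. -/
theorem interval_containing_residue_class (α : Ordinal) (hα : Order.IsSuccLimit α)
    (n : ℕ) (hn : 0 < n) (i : ℕ) (hi : i < n)
    (I : Set Ordinal) (hIsub : I ⊆ Set.Iio α)
    (hIconv : ∀ x y z, x ∈ I → y ∈ I → x ≤ z → z ≤ y → z ∈ I)
    (hres : ∀ β : Ordinal, β < α →
      (∃ γ : Ordinal, (γ = 0 ∨ Order.IsSuccLimit γ) ∧ ∃ k : ℕ, β = γ + (i : Ordinal) + (k * n : ℕ)) →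
      β ∈ I) :
    ∀ δ : Ordinal, (i : Ordinal) ≤ δ → δ < α → δ ∈ I := by
  have haddnat : ∀ (a : Ordinal) (j : ℕ), a < α → a + (j : Ordinal) < α := by
    intro a j ha
    induction j with
    | zero => simpa
    | succ j ih =>
      rw [Nat.cast_succ, ← add_assoc, Ordinal.add_one_eq_succ]
      exact hα.succ_lt ih
  intro δ hiδ hδα
  set γ := ω * (δ / ω) with hγ
  obtain ⟨m, hm⟩ := Ordinal.lt_omega0.mp (Ordinal.mod_lt δ omega0_ne_zero)
  have hδ : δ = γ + (m : Ordinal) := by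
    rw [hγ, ← hm, Ordinal.div_add_mod]
  have hγlim : γ = 0 ∨ Order.IsSuccLimit γ := by
    rcases eq_or_ne (δ / ω) 0 with h | h
    · left; rw [hγ, h, mul_zero]
    · right; exact isSuccLimit_mul_left isSuccLimit_omega0 (pos_iff_ne_zero.2 h)
  have hγδ : γ ≤ δ := hδ ▸ le_self_add
  rcases le_or_gt i m with him | him
  · -- δ sits in the block [γ + i + k·n, γ + i + (k+1)·n)
    obtain ⟨k, r, hqr, hrlt⟩ : ∃ q r, m - i = q * n + r ∧ r < n :=
      ⟨(m - i) / n, (m - i) % n, by rw [mul_comm]; exact (Nat.div_add_mod _ _).symm,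
        Nat.mod_lt _ hn⟩
    have hx_nat : i + k * n ≤ m := by omega
    have hy_nat : m < i + (k + 1) * n := by
      have : (k + 1) * n = k * n + n := by ring
      omega
    set x := γ + (i : Ordinal) + ((k * n : ℕ) : Ordinal) with hxdef
    set y := γ + (i : Ordinal) + (((k + 1) * n : ℕ) : Ordinal) with hydef
    have hxcast : x = γ + ((i + k * n : ℕ) : Ordinal) := by
      rw [hxdef, Nat.cast_add, add_assoc]
    have hycast : y = γ + ((i + (k + 1) * n : ℕ) : Ordinal) := by
      rw [hydef, Nat.cast_add, add_assoc]
    have hxδ : x ≤ δ := by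
      rw [hxcast, hδ]
      exact add_le_add_right (by exact_mod_cast hx_nat) _
    have hδy : δ ≤ y := by
      rw [hycast, hδ]
      exact le_of_lt (add_lt_add_right (by exact_mod_cast hy_nat) _)
    have hyα : y < α := by rw [hycast]; exact haddnat γ _ (lt_of_le_of_lt hγδ hδα)
    have hxI : x ∈ I := hres x (lt_of_le_of_lt hxδ hδα) ⟨γ, hγlim, k, rfl⟩
    have hyI : y ∈ I := hres y hyα ⟨γ, hγlim, k + 1, rfl⟩
    exact hIconv x y δ hxI hyI hxδ hδy
  · -- m < i, so γ is a nonzero limit; use x = i and y = γ + i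
    have hγnz : Order.IsSuccLimit γ := by
      rcases hγlim with h | h
      · exfalso
        rw [h, zero_add] at hδ
        have : (i : Ordinal) ≤ (m : Ordinal) := hδ ▸ hiδ
        exact absurd (by exact_mod_cast this) (Nat.not_le.2 him)
      · exact h
    have hxδ : (i : Ordinal) ≤ δ := hiδ
    have hδy : δ ≤ γ + (i : Ordinal) := by
      rw [hδ]
      exact le_of_lt (add_lt_add_right (by exact_mod_cast him) _)
    have hyα : γ + (i : Ordinal) < α := haddnat γ i (lt_of_le_of_lt hγδ hδα)
    have hxI : (i : Ordinal) ∈ I := by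
      refine hres _ (lt_of_le_of_lt hxδ hδα) ⟨0, Or.inl rfl, 0, ?_⟩
      simp
    have hyI : γ + (i : Ordinal) ∈ I := by
      refine hres _ hyα ⟨γ, Or.inr hγnz, 0, ?_⟩
      simp
    exact hIconv _ _ δ hxI hyI hxδ hδy
end

section
/- Two linear orders L and M on the same set V are orthogonal if and only if the bichain (V, L, M) is prime and embedding rigid. -/
/-- `f` preserves the relation `r`. -/
def Preserves {V : Type*} (r : V → V → Prop) (f : V → V) : Prop :=
  ∀ x y, r x y → r (f x) (f y)

/-- `I` is an interval of the (linear) order `r`. -/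
def IsIntervalOf {V : Type*} (r : V → V → Prop) (I : Set V) : Prop :=
  ∀ x y z, x ∈ I → y ∈ I → r x z → r z y → z ∈ I

/-- `f` is an embedding of the bichain `(V, r, s)` into itself. -/
def IsBichainEmbedding {V : Type*} (r s : V → V → Prop) (f : V → V) : Prop :=
  Function.Injective f ∧ (∀ x y, r x y ↔ r (f x) (f y)) ∧ (∀ x y, s x y ↔ s (f x) (f y))

/-- The bichain `(V, r, s)` is prime: its only common intervals are trivial. -/
def BichainPrime {V : Type*} (r s : V → V → Prop) : Prop :=
  ∀ I : Set V, IsIntervalOf r I → IsIntervalOf s I →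
    I = ∅ ∨ I = Set.univ ∨ ∃ a, I = {a}

/-- The bichain `(V, r, s)` is embedding rigid. -/
def BichainEmbRigid {V : Type*} (r s : V → V → Prop) : Prop :=
  ∀ f : V → V, IsBichainEmbedding r s f → f = id

/-- `r` and `s` are orthogonal: the only maps preserving both are the identity and
the constant maps. -/
def OrthogonalRel {V : Type*} (r s : V → V → Prop) : Prop :=
  ∀ f : V → V, Preserves r f → Preserves s f → f = id ∨ ∃ c, f = Function.const V c

/-- Collapsing a common interval preserves a linear order. -/
lemma collapse_preserves {V : Type*} [DecidablePred (· ∈ (∅ : Set V))]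
    (r : V → V → Prop) (hr : IsLinearOrder V r) (I : Set V) [DecidablePred (· ∈ I)]
    (hI : IsIntervalOf r I) (a : V) (ha : a ∈ I) :
    Preserves r (fun z => if z ∈ I then a else z) := by
  haveI := hr
  intro x y hxy
  by_cases hx : x ∈ I <;> by_cases hy : y ∈ I <;> simp only [hx, hy, if_pos, if_neg,
    if_true, if_false]
  · exact refl_of r a
  · rcases total_of r a y with h | h
    · exact h
    · exact absurd (hI x a y hx ha hxy h) hy
  · rcases total_of r x a with h | h
    · exact h
    · exact absurd (hI a y x ha hy h hxy) hx
  · exact hxy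

/-- Fibers of an order-preserving map are intervals. -/
lemma fiber_interval {V : Type*} (r : V → V → Prop) (hr : IsLinearOrder V r)
    (f : V → V) (hf : Preserves r f) (c : V) : IsIntervalOf r {z | f z = c} := by
  haveI := hr
  intro x y z hx hy hxz hzy
  have h1 : r c (f z) := hx ▸ hf x z hxz
  have h2 : r (f z) c := hy ▸ hf z y hzy
  exact antisymm h2 h1

/-- Two linear orders `L` and `M` on the same set are orthogonal if and only if the
bichain `(V, L, M)` is prime and embedding rigid. -/
theorem orthogonal_iff_prime_and_embRigid {V : Type*} (L M : V → V → Prop)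
    (hL : IsLinearOrder V L) (hM : IsLinearOrder V M) :
    OrthogonalRel L M ↔ BichainPrime L M ∧ BichainEmbRigid L M := by
  classical
  haveI := hL; haveI := hM
  constructor
  · intro ho
    constructor
    · -- prime
      intro I hIL hIM
      by_contra h
      push_neg at h
      obtain ⟨hne, hnuniv, hnsing⟩ := h
      obtain ⟨a, ha⟩ := hne
      obtain ⟨b, hb⟩ : ∃ b, b ∉ I := by
        by_contra hb; push_neg at hb
        exact hnuniv (Set.eq_univ_of_forall hb)
      obtain ⟨x, hx, hxa⟩ : ∃ x ∈ I, x ≠ a := by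
        by_contra hc; push_neg at hc
        exact hnsing a (Set.eq_singleton_iff_unique_mem.mpr ⟨ha, hc⟩)
      set f : V → V := fun z => if z ∈ I then a else z with hf
      rcases ho f (collapse_preserves L hL I hIL a ha)
          (collapse_preserves M hM I hIM a ha) with hid | ⟨c, hc⟩
      · have : f x = x := congrFun hid x
        simp only [hf, if_pos hx] at this
        exact hxa this.symm
      · have h1 : f a = c := congrFun hc a
        have h2 : f b = c := congrFun hc b
        simp only [hf, if_pos ha, if_neg hb] at h1 h2
        exact hb (h1.trans h2.symm ▸ ha)
    · -- embedding rigid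
      intro f ⟨hinj, hrL, hrM⟩
      rcases ho f (fun x y h => (hrL x y).mp h) (fun x y h => (hrM x y).mp h) with
        hid | ⟨c, hc⟩
      · exact hid
      · funext x
        have h1 : f x = c := congrFun hc x
        have h2 : f c = c := congrFun hc c
        have : x = c := hinj (h1.trans h2.symm)
        simp [this, h2]
  · rintro ⟨hp, hrig⟩ f hfL hfM
    by_cases hcase : ∃ x, ({z | f z = f x} : Set V) = Set.univ
    · right
      obtain ⟨x, hx⟩ := hcase
      exact ⟨f x, funext fun z => Set.eq_univ_iff_forall.mp hx z⟩
    · left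
      push_neg at hcase
      have hinj : Function.Injective f := by
        intro x y hxy
        rcases hp {z | f z = f x} (fiber_interval L hL f hfL (f x))
            (fiber_interval M hM f hfM (f x)) with h | h | ⟨a, h⟩
        · have hx0 : x ∈ ({z | f z = f x} : Set V) := rfl
          rw [h] at hx0; exact absurd hx0 (Set.notMem_empty x)
        · exact absurd h (hcase x)
        · have hx0 : x ∈ ({z | f z = f x} : Set V) := rfl
          have hy0 : y ∈ ({z | f z = f x} : Set V) := hxy.symm
          rw [h] at hx0 hy0
          simp only [Set.mem_singleton_iff] at hx0 hy0
          rw [hx0, hy0]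
      apply hrig
      refine ⟨hinj, fun x y => ⟨hfL x y, ?_⟩, fun x y => ⟨hfM x y, ?_⟩⟩
      · intro h
        rcases total_of L x y with h' | h'
        · exact h'
        · have := hinj (antisymm (hfL y x h') h)
          exact this ▸ refl_of L x
      · intro h
        rcases total_of M x y with h' | h'
        · exact h'
        · have := hinj (antisymm (hfM y x h') h)
          exact this ▸ refl_of M x
end

section
/- For a subset A of ℕ with 1 ∉ A, the graph G(A) is prime: it has no nontrivial autonomous set. Here G(A) has vertex set ℕ ∪ (A × {1}) and edges {n, n+1} for n ∈ ℕ together with {n, (n,1)} for n ∈ A. -/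
/-- The vertex set of the graph `G(A)`: `ℕ ∪ (A × {1})`. -/
def GVert (A : Set ℕ) : Type := ℕ ⊕ {a : ℕ // a ∈ A}

/-- The graph `G(A)`, with edges `{n, n+1}` for `n ∈ ℕ` and `{n, (n,1)}` for `n ∈ A`. -/
def GGraph (A : Set ℕ) : SimpleGraph (GVert A) :=
  SimpleGraph.fromRel (fun v w =>
    match v, w with
    | Sum.inl n, Sum.inl m => m = n + 1
    | Sum.inl n, Sum.inr a => a.1 = n
    | _, _ => False)

/-- `X` is an autonomous set of vertices of `G`. -/
def Autonomous {V : Type*} (G : SimpleGraph V) (X : Set V) : Prop :=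
  ∀ v ∉ X, (∀ x ∈ X, G.Adj v x) ∨ (∀ x ∈ X, ¬ G.Adj v x)

lemma adj_inl_inl (A : Set ℕ) (n m : ℕ) :
    (GGraph A).Adj (Sum.inl n) (Sum.inl m) ↔ (m = n + 1 ∨ n = m + 1) := by
  rw [GGraph]; erw [SimpleGraph.fromRel_adj]
  constructor
  · rintro ⟨-, h⟩; exact h
  · intro h
    refine ⟨fun he => ?_, h⟩
    have : n = m := Sum.inl.inj he
    omega

lemma adj_inl_inr (A : Set ℕ) (n : ℕ) (a : {a : ℕ // a ∈ A}) :
    (GGraph A).Adj (Sum.inl n) (Sum.inr a) ↔ a.1 = n := by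
  rw [GGraph]; erw [SimpleGraph.fromRel_adj]
  constructor
  · rintro ⟨-, h | h⟩
    · exact h
    · exact h.elim
  · intro h
    refine ⟨fun he => ?_, Or.inl h⟩
    exact Sum.inl_ne_inr he

lemma adj_inr_inr (A : Set ℕ) (a b : {a : ℕ // a ∈ A}) :
    ¬ (GGraph A).Adj (Sum.inr a) (Sum.inr b) := by
  rw [GGraph]; erw [SimpleGraph.fromRel_adj]
  rintro ⟨-, h | h⟩ <;> exact h

lemma exists_boundary (A : Set ℕ) (X : Set (GVert A)) (hne : X.Nonempty)
    (hnu : X ≠ Set.univ) : ∃ v ∉ X, ∃ u ∈ X, (GGraph A).Adj v u := by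
  by_contra h
  push_neg at h
  apply hnu
  obtain ⟨x, hx⟩ := hne
  have hinl : ∃ n, Sum.inl n ∈ X := by
    cases x with
    | inl n => exact ⟨n, hx⟩
    | inr a =>
      by_contra hc
      push_neg at hc
      exact h (Sum.inl a.1) (hc a.1) _ hx ((adj_inl_inr A a.1 a).2 rfl)
  obtain ⟨n, hn⟩ := hinl
  have step : ∀ m, (Sum.inl m ∈ X ↔ Sum.inl (m + 1) ∈ X) := by
    intro m
    constructor
    · intro hm
      by_contra hm1
      exact h _ hm1 _ hm ((adj_inl_inl A (m+1) m).2 (Or.inr rfl))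
    · intro hm1
      by_contra hm
      exact h _ hm _ hm1 ((adj_inl_inl A m (m+1)).2 (Or.inl rfl))
  have h0 : ∀ m, (Sum.inl m ∈ X ↔ Sum.inl 0 ∈ X) := by
    intro m
    induction m with
    | zero => exact Iff.rfl
    | succ k ih => exact (step k).symm.trans ih
  have hall : ∀ m, Sum.inl m ∈ X := fun m => (h0 m).2 ((h0 n).1 hn)
  ext z
  simp only [Set.mem_univ, iff_true]
  cases z with
  | inl m => exact hall m
  | inr a =>
    by_contra hz
    exact h _ hz _ (hall a.1) (((adj_inl_inr A a.1 a).2 rfl).symm)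

/-- If `1 ∉ A` then the graph `G(A)` is prime: every autonomous set is trivial. -/
theorem GGraph_prime (A : Set ℕ) (hA : 1 ∉ A) :
    ∀ X : Set (GVert A), Autonomous (GGraph A) X →
      X = ∅ ∨ X = Set.univ ∨ ∃ a, X = {a} := by
  intro X hX
  by_contra hcon
  push_neg at hcon
  obtain ⟨h1, h2, h3⟩ := hcon
  have hne : X.Nonempty := h1
  obtain ⟨v, hv, u, hu, hadj⟩ := exists_boundary A X hne h2
  have hall : ∀ z ∈ X, (GGraph A).Adj v z := by
    rcases hX v hv with h | h
    · exact h
    · exact absurd hadj (h u hu)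
  -- second element of X distinct from u
  have hy : ∃ y ∈ X, y ≠ u := by
    by_contra hc
    push_neg at hc
    exact h3 u (Set.eq_singleton_iff_unique_mem.2 ⟨hu, hc⟩)
  obtain ⟨y, hyX, hyu⟩ := hy
  -- v must be of the form inl N
  obtain ⟨N, rfl⟩ : ∃ N, v = Sum.inl N := by
    cases v with
    | inl N => exact ⟨N, rfl⟩
    | inr a =>
      have hu' : u = Sum.inl a.1 := by
        cases u with
        | inl m =>
          have h' := ((GGraph A).adj_comm _ _).1 (hall _ hu)
          rw [adj_inl_inr] at h'
          exact congrArg Sum.inl h'.symm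
        | inr b => exact absurd (hall _ hu) (adj_inr_inr A a b)
      have hy' : y = Sum.inl a.1 := by
        cases y with
        | inl m =>
          have h' := ((GGraph A).adj_comm _ _).1 (hall _ hyX)
          rw [adj_inl_inr] at h'
          exact congrArg Sum.inl h'.symm
        | inr b => exact absurd (hall _ hyX) (adj_inr_inr A a b)
      exact absurd (hy'.trans hu'.symm) hyu
  -- classify members of X
  have hclass : ∀ z ∈ X, (∃ m, z = Sum.inl m ∧ (m = N + 1 ∨ N = m + 1)) ∨
      (∃ a : {a : ℕ // a ∈ A}, z = Sum.inr a ∧ a.1 = N) := by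
    intro z hz
    cases z with
    | inl m => exact Or.inl ⟨m, rfl, (adj_inl_inl A N m).1 (hall _ hz)⟩
    | inr a => exact Or.inr ⟨a, rfl, (adj_inl_inr A N a).1 (hall _ hz)⟩
  -- helper: inl (N+2) ∉ X
  have ht2 : Sum.inl (N + 2) ∉ X := by
    intro ht
    rcases hclass _ ht with ⟨m, hm, hor⟩ | ⟨a, ha, -⟩
    · have : N + 2 = m := Sum.inl.inj hm
      omega
    · exact Sum.inl_ne_inr ha
  -- key contradiction lemmas
  -- case: inl (N+1) ∈ X together with another element z ∈ X not adjacent to inl (N+2)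
  have key1 : ∀ z ∈ X, Sum.inl (N + 1) ∈ X →
      ¬ (GGraph A).Adj (Sum.inl (N + 2)) z → False := by
    intro z hz hN1 hnadj
    rcases hX _ ht2 with h | h
    · exact hnadj (h z hz)
    · exact h _ hN1 ((adj_inl_inl A (N+2) (N+1)).2 (Or.inr rfl))
  -- now case analysis on forms of u and y
  rcases hclass u hu with ⟨mu, rfl, hmu⟩ | ⟨au, rfl, hau⟩ <;>
    rcases hclass y hyX with ⟨my, rfl, hmy⟩ | ⟨ay, rfl, hay⟩
  · -- both inl
    have hne' : mu ≠ my := fun he => hyu (congrArg Sum.inl he.symm)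
    -- one of them is N+1, the other is N-1
    rcases hmu with h' | h'
    · -- mu = N+1, so my+1 = N
      have hmyN : N = my + 1 := by rcases hmy with h'' | h'' <;> omega
      refine key1 _ hyX (h' ▸ hu) ?_
      rw [adj_inl_inl]; omega
    · have hmyN : my = N + 1 := by rcases hmy with h'' | h'' <;> omega
      refine key1 _ hu (hmyN ▸ hyX) ?_
      rw [adj_inl_inl]; omega
  · -- u = inl mu, y = inr ay with ay.1 = N
    have hNA : N ∈ A := hay ▸ ay.2
    rcases hmu with h' | h'
    · -- mu = N+1 : use key1 with z = y
      refine key1 _ hyX (h' ▸ hu) ?_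
      rw [adj_inl_inr]; omega
    · -- N = mu + 1 : N ≥ 2 since N ∈ A and 1 ∉ A
      have hN2 : 2 ≤ N := by
        rcases Nat.lt_or_ge N 2 with hlt | hge
        · interval_cases N
          · omega
          · exact absurd hNA hA
        · exact hge
      -- t = inl (mu - 1), with mu = N - 1 ≥ 1
      have hmu1 : 1 ≤ mu := by omega
      have htX : Sum.inl (mu - 1) ∉ X := by
        intro ht
        rcases hclass _ ht with ⟨m, hm, hor⟩ | ⟨a, ha, -⟩
        · have : mu - 1 = m := Sum.inl.inj hm
          omega
        · exact Sum.inl_ne_inr ha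
      rcases hX _ htX with h'' | h''
      · have := h'' _ hyX
        rw [adj_inl_inr] at this
        omega
      · exact h'' _ hu ((adj_inl_inl A (mu - 1) mu).2 (Or.inl (by omega)))
  · -- u = inr au, y = inl my : symmetric
    have hNA : N ∈ A := hau ▸ au.2
    rcases hmy with h' | h'
    · refine key1 _ hu (h' ▸ hyX) ?_
      rw [adj_inl_inr]; omega
    · have hN2 : 2 ≤ N := by
        rcases Nat.lt_or_ge N 2 with hlt | hge
        · interval_cases N
          · omega
          · exact absurd hNA hA
        · exact hge
      have hmy1 : 1 ≤ my := by omega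
      have htX : Sum.inl (my - 1) ∉ X := by
        intro ht
        rcases hclass _ ht with ⟨m, hm, hor⟩ | ⟨a, ha, -⟩
        · have : my - 1 = m := Sum.inl.inj hm
          omega
        · exact Sum.inl_ne_inr ha
      rcases hX _ htX with h'' | h''
      · have := h'' _ hu
        rw [adj_inl_inr] at this
        omega
      · exact h'' _ hyX ((adj_inl_inl A (my - 1) my).2 (Or.inl (by omega)))
  · -- both inr
    exact hyu (congrArg Sum.inr (Subtype.ext (hay.trans hau.symm)))
end

section
/- There exists a family 𝒜 of 2^{ℵ₀} subsets of ℕ such that for any two distinct A, A' ∈ 𝒜 and any integer k, the translate A + k is not almost included in A' (i.e., (A + k) \ A' is infinite). -/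
namespace CtFam

def s (x : ℕ → Bool) (n : ℕ) : ℕ := ∑ i ∈ Finset.range n, if x i then 2^i else 0

def c (x : ℕ → Bool) (n : ℕ) : ℕ := (1 + s x n) * 2^(n*n)

lemma s_succ (x : ℕ → Bool) (n : ℕ) :
    s x (n+1) = s x n + (if x n then 2^n else 0) := Finset.sum_range_succ _ _

lemma s_lt (x : ℕ → Bool) (n : ℕ) : s x n < 2^n := by
  induction n with
  | zero => simp [s]
  | succ n ih =>
    have h2 : 2^(n+1) = 2^n + 2^n := by rw [pow_succ]; ring
    have hs := s_succ x n
    split at hs <;> omega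

lemma s_prefix (x y : ℕ → Bool) (n : ℕ) (h : s x n = s y n) : ∀ i < n, x i = y i := by
  induction n with
  | zero => intro i hi; exact absurd hi (Nat.not_lt_zero i)
  | succ n ih =>
    have hx := s_lt x n
    have hy := s_lt y n
    have hsx := s_succ x n
    have hsy := s_succ y n
    have hb2 : s x n = s y n := by
      cases hxn : x n <;> cases hyn : y n <;>
        rw [hxn] at hsx <;> rw [hyn] at hsy <;> simp at hsx hsy <;> omega
    have hb1 : x n = y n := by
      cases hxn : x n <;> cases hyn : y n <;>
        rw [hxn] at hsx <;> rw [hyn] at hsy <;> simp at hsx hsy <;>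
        first | rfl | (exfalso; omega)
    intro i hi
    rcases Nat.lt_succ_iff_lt_or_eq.mp hi with h' | h'
    · exact ih hb2 i h'
    · subst h'; exact hb1

lemma key (x y : ℕ → Bool) (hxy : ∃ j, x j ≠ y j) (k : ℤ) :
    {m : ℕ | (∃ a ∈ Set.range (c x), (a : ℤ) + k = (m : ℤ)) ∧ m ∉ Set.range (c y)}.Infinite := by
  obtain ⟨j, hj⟩ := hxy
  apply Set.infinite_of_not_bddAbove
  rintro ⟨b, hb⟩
  obtain ⟨K, hKdef⟩ : ∃ K : ℕ, K = k.natAbs := ⟨_, rfl⟩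
  obtain ⟨n, hjn, hn2, hbKn⟩ : ∃ n : ℕ, j < n ∧ 2 ≤ n ∧ b + K + 3 ≤ n :=
    ⟨j + b + K + 3, by omega, by omega, by omega⟩
  have hnlt : n < 2^n := Nat.lt_two_pow_self
  have hQ1 : 2^n ≤ 2^(n*n) := Nat.pow_le_pow_right (by norm_num) (by nlinarith)
  have hQ3 : 4 * 2^n ≤ 2^(n*n) := by
    have e : 4 * 2^n = 2^(n+2) := by rw [pow_add]; ring
    rw [e]
    exact Nat.pow_le_pow_right (by norm_num) (by nlinarith)
  have hkK1 : k ≤ (K : ℤ) := by omega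
  have hkK2 : -(K : ℤ) ≤ k := by omega
  have hK : K < 2^n := by omega
  have hc1 : 2^(n*n) ≤ c x n := Nat.le_mul_of_pos_left _ (by omega)
  have hc2 : c x n ≤ 2^n * 2^(n*n) := by
    have := s_lt x n
    exact Nat.mul_le_mul_right _ (by omega)
  have hpos : 0 ≤ (c x n : ℤ) + k := by omega
  obtain ⟨m, hm⟩ : ∃ m : ℕ, (m : ℤ) = (c x n : ℤ) + k :=
    ⟨((c x n : ℤ) + k).toNat, Int.toNat_of_nonneg hpos⟩
  have hmem : m ∈ {m : ℕ | (∃ a ∈ Set.range (c x), (a : ℤ) + k = (m : ℤ)) ∧ m ∉ Set.range (c y)} := by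
    constructor
    · exact ⟨c x n, ⟨n, rfl⟩, hm.symm⟩
    · rintro ⟨m', hm'⟩
      have hcm1 : 2^(m'*m') ≤ c y m' := Nat.le_mul_of_pos_left _ (by omega)
      have hcm2 : c y m' ≤ 2^m' * 2^(m'*m') := by
        have := s_lt y m'
        exact Nat.mul_le_mul_right _ (by omega)
      rcases lt_trichotomy m' n with h' | h' | h'
      · -- m' < n
        have h4 : 4 * c y m' ≤ 2^(n*n) := by
          calc 4 * c y m' ≤ 4 * (2^m' * 2^(m'*m')) := Nat.mul_le_mul_left _ hcm2
            _ = 2^(m'*m' + m' + 2) := by rw [pow_add, pow_add]; ring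
            _ ≤ 2^(n*n) := Nat.pow_le_pow_right (by norm_num) (by nlinarith)
        omega
      · -- m' = n
        subst h'
        have hA : (m : ℤ) = (1 + (s y m' : ℤ)) * 2^(m'*m') := by
          rw [← hm']; push_cast [c]; ring
        have hB : (m : ℤ) = (1 + (s x m' : ℤ)) * 2^(m'*m') + k := by
          rw [hm]; push_cast [c]; ring
        have hek : k = ((s y m' : ℤ) - (s x m' : ℤ)) * 2^(m'*m') := by
          linear_combination hA - hB
        have hne : s x m' ≠ s y m' := fun h => hj (s_prefix x y m' h j hjn)
        have hQpos : (0 : ℤ) ≤ 2^(m'*m') := by positivity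
        have hQc : ((2^(m'*m') : ℕ) : ℤ) = (2:ℤ)^(m'*m') := by push_cast; ring
        rcases Nat.lt_or_ge (s x m') (s y m') with hs | hs
        · have : (2:ℤ)^(m'*m') ≤ k := by
            rw [hek]
            exact le_mul_of_one_le_left hQpos (by omega)
          omega
        · have hs' : s y m' < s x m' := by omega
          have : k ≤ -(2:ℤ)^(m'*m') := by
            rw [hek]
            have h1 : ((s y m' : ℤ) - (s x m' : ℤ)) ≤ -1 := by omega
            nlinarith
          omega
      · -- n < m'
        have h5 : 2 * (2^n * 2^(n*n)) ≤ c y m' := by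
          calc 2 * (2^n * 2^(n*n)) = 2^(n*n + n + 1) := by rw [pow_add, pow_add]; ring
            _ ≤ 2^(m'*m') := Nat.pow_le_pow_right (by norm_num) (by nlinarith)
            _ ≤ c y m' := hcm1
        have h6 : 2^n ≤ 2^n * 2^(n*n) := Nat.le_mul_of_pos_right _ (by positivity)
        omega
  have := hb hmem
  omega

lemma c_inj : Function.Injective (fun x : ℕ → Bool => Set.range (c x)) := by
  intro x y h
  by_contra hne
  have hxy : ∃ j, x j ≠ y j := by
    by_contra h'
    push_neg at h'
    exact hne (funext h')
  obtain ⟨m, ⟨a, ha, hak⟩, hm⟩ := (key x y hxy 0).nonempty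
  have ham : a = m := by exact_mod_cast hak
  apply hm
  rw [← show Set.range (c x) = Set.range (c y) from h]
  exact ham ▸ ha

end CtFam

/-- There is a family of continuum-many subsets of `ℕ` such that for any two distinct
members `A, A'` and any integer `k`, the translate `A + k` is not almost included
in `A'`. -/
theorem exists_continuum_family_no_translate_almost_included :
    ∃ 𝒜 : Set (Set ℕ), Cardinal.mk 𝒜 = Cardinal.continuum ∧
      ∀ A ∈ 𝒜, ∀ A' ∈ 𝒜, A ≠ A' → ∀ k : ℤ,
        {m : ℕ | (∃ a ∈ A, (a : ℤ) + k = (m : ℤ)) ∧ m ∉ A'}.Infinite := by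
  refine ⟨Set.range (fun x : ℕ → Bool => Set.range (CtFam.c x)), ?_, ?_⟩
  · rw [Cardinal.mk_range_eq _ CtFam.c_inj]
    have h1 : Cardinal.mk (ℕ → Bool) = 2 ^ Cardinal.aleph0 := by
      rw [← Cardinal.mk_bool, ← Cardinal.mk_nat, Cardinal.power_def]
    rw [h1, Cardinal.two_power_aleph0]
  · rintro A ⟨x, rfl⟩ A' ⟨y, rfl⟩ hne k
    have hxy : ∃ j, x j ≠ y j := by
      by_contra h'
      push_neg at h'
      exact hne (congrArg (fun z => Set.range (CtFam.c z)) (funext h'))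
    exact CtFam.key x y hxy k
end

section
/- Let n < ω and let f be an order-embedding of a chain C of order type ω^{n+1} into itself that is not the identity. Let (C_α)_{α < ω^n} be the decomposition of C into consecutive intervals each of order type ω. Then there exist α ≤ β < ω^n such that f is not the identity on C_α, f(C_α) \ C_β is finite, and moreover f(C_α) ⊆ C_α whenever α = β. -/
open Ordinal

/-- The `α`-th block of order type `ω` in the chain `ω^{n+1}`:
the interval `[ω·α, ω·α + ω)`. -/
def Block (n : ℕ) (α : Ordinal) : Set {x : Ordinal // x < ω ^ (n + 1 : ℕ)} :=
  {x | ω * α ≤ x.1 ∧ x.1 < ω * α + ω}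

private lemma omega_div_mono {a b : Ordinal} (h : a ≤ b) : a / ω ≤ b / ω := by
  rw [Ordinal.div_le omega0_ne_zero]
  calc a ≤ b := h
    _ < ω * (b / ω) + ω := by
        conv_lhs => rw [← Ordinal.div_add_mod b ω]
        exact add_lt_add_right (Ordinal.mod_lt b omega0_ne_zero) _
    _ = ω * Order.succ (b / ω) := by rw [Order.succ_eq_add_one, mul_add_one]

private lemma mem_block_iff {n : ℕ} {x : {x : Ordinal // x < ω ^ (n + 1 : ℕ)}} {α : Ordinal} :
    x ∈ Block n α ↔ x.1 / ω = α := by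
  constructor
  · rintro ⟨h1, h2⟩
    refine le_antisymm ?_ ((Ordinal.le_div omega0_ne_zero).2 h1)
    rw [← Order.lt_succ_iff, Ordinal.div_lt omega0_ne_zero, Order.succ_eq_add_one, mul_add_one]
    exact h2
  · rintro rfl
    refine ⟨Ordinal.mul_div_le _ _, ?_⟩
    conv_lhs => rw [← Ordinal.div_add_mod x.1 ω]
    exact add_lt_add_right (Ordinal.mod_lt _ omega0_ne_zero) _

private lemma blockidx_lt {n : ℕ} (x : {x : Ordinal // x < ω ^ (n + 1 : ℕ)}) :
    x.1 / ω < ω ^ n := by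
  rw [Ordinal.div_lt omega0_ne_zero, ← pow_succ']
  exact x.2

/-- the `m`-th point of the `α`-th block -/
def blkpt (n : ℕ) (α : Ordinal) (hα : α < ω ^ n) (m : ℕ) :
    {x : Ordinal // x < ω ^ (n + 1 : ℕ)} :=
  ⟨ω * α + m, by
    calc ω * α + (m : Ordinal) < ω * α + ω := add_lt_add_right (nat_lt_omega0 m) _
      _ = ω * (α + 1) := by rw [mul_add_one]
      _ ≤ ω * ω ^ n := mul_le_mul_right (Order.add_one_le_iff.mpr hα) ω
      _ = ω ^ (n + 1) := (pow_succ' ω n).symm⟩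

private lemma blkpt_mem {n : ℕ} {α : Ordinal} (hα : α < ω ^ n) (m : ℕ) :
    blkpt n α hα m ∈ Block n α :=
  ⟨le_self_add, add_lt_add_right (nat_lt_omega0 m) _⟩

/-- block index of the image of the `m`-th point of block `α` -/
noncomputable def bk (n : ℕ) (f : {x : Ordinal // x < ω ^ (n + 1 : ℕ)} → {x : Ordinal // x < ω ^ (n + 1 : ℕ)})
    (α : Ordinal) (hα : α < ω ^ n) (m : ℕ) : Ordinal :=
  (f (blkpt n α hα m)).1 / ω

section
variable {n : ℕ} {f : {x : Ordinal // x < ω ^ (n + 1 : ℕ)} → {x : Ordinal // x < ω ^ (n + 1 : ℕ)}}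
  (hf : StrictMono f)
include hf

private lemma bk_mono_m {α : Ordinal} (hα : α < ω ^ n) {m m' : ℕ} (h : m ≤ m') :
    bk n f α hα m ≤ bk n f α hα m' :=
  omega_div_mono (Subtype.coe_le_coe.2 (hf.monotone (Subtype.mk_le_mk.2
    (add_le_add_right (Nat.cast_le.2 h) _))))

private lemma bk_mono_a {α α' : Ordinal} (hα : α < ω ^ n) (hα' : α' < ω ^ n) (h : α ≤ α')
    (m : ℕ) : bk n f α hα m ≤ bk n f α' hα' m :=
  omega_div_mono (Subtype.coe_le_coe.2 (hf.monotone (Subtype.mk_le_mk.2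
    (add_le_add_left (mul_le_mul_right h ω) _))))

private lemma le_bk {α : Ordinal} (hα : α < ω ^ n) (m : ℕ) : α ≤ bk n f α hα m := by
  refine (Ordinal.le_div omega0_ne_zero).2 ?_
  calc ω * α ≤ ω * α + m := le_self_add
    _ ≤ (f (blkpt n α hα m)).1 := Subtype.coe_le_coe.2 hf.le_apply

private lemma bk_lt {α : Ordinal} (hα : α < ω ^ n) (m : ℕ) : bk n f α hα m < ω ^ n :=
  blockidx_lt _

private lemma block_decomp {α : Ordinal} (hα : α < ω ^ n)
    {x : {x : Ordinal // x < ω ^ (n + 1 : ℕ)}} (hx : x ∈ Block n α) :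
    ∃ m : ℕ, x = blkpt n α hα m := by
  obtain ⟨h1, h2⟩ := hx
  have hc : x.1 - ω * α < ω := by
    have := Ordinal.add_sub_cancel_of_le h1
    rw [← this] at h2
    exact (add_lt_add_iff_left _).1 h2
  obtain ⟨m, hm⟩ := lt_omega0.1 hc
  refine ⟨m, Subtype.ext ?_⟩
  show x.1 = ω * α + (m : Ordinal)
  rw [← hm, Ordinal.add_sub_cancel_of_le h1]

/-- the good case: `bk` eventually constant on a non-identity block gives the conclusion -/
private lemma good_case {α : Ordinal} (hα : α < ω ^ n) (K : ℕ)
    (hK : ∀ m, K ≤ m → bk n f α hα m = bk n f α hα K)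
    (hnid : ∃ x ∈ Block n α, f x ≠ x) :
    ∃ α' β : Ordinal, α' ≤ β ∧ β < ω ^ (n : ℕ) ∧
      (∃ x ∈ Block n α', f x ≠ x) ∧
      (f '' Block n α' \ Block n β).Finite ∧
      (α' = β → f '' Block n α' ⊆ Block n β) := by
  refine ⟨α, bk n f α hα K, le_bk hf hα K, bk_lt hf hα K, hnid, ?_, ?_⟩
  · refine Set.Finite.subset (Set.Finite.image (fun m : ℕ => f (blkpt n α hα m))
      (Set.finite_Iio K)) ?_
    rintro y ⟨⟨x, hx, rfl⟩, hy2⟩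
    obtain ⟨m, rfl⟩ := block_decomp hf hα hx
    refine ⟨m, ?_, rfl⟩
    by_contra hm
    simp only [Set.mem_Iio, not_lt] at hm
    exact hy2 (mem_block_iff.2 (hK m hm))
  · intro heq
    rintro y ⟨x, hx, rfl⟩
    obtain ⟨m, rfl⟩ := block_decomp hf hα hx
    refine mem_block_iff.2 ?_
    show bk n f α hα m = bk n f α hα K
    rcases le_or_gt K m with h | h
    · exact hK m h
    · refine le_antisymm (bk_mono_m hf hα h.le) ?_
      calc bk n f α hα K = α := heq.symm
        _ ≤ bk n f α hα m := le_bk hf hα m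

/-- the bad case pushes all later images up by `ω` blocks -/
private lemma bad_step {α : Ordinal} (hα : α < ω ^ n)
    (hbad : ∀ K : ℕ, ∃ m, K ≤ m ∧ bk n f α hα m ≠ bk n f α hα K)
    (y : {x : Ordinal // x < ω ^ (n + 1 : ℕ)}) (hy : ω * α + ω ≤ y.1) :
    bk n f α hα 0 + ω ≤ (f y).1 / ω := by
  have step : ∀ j : ℕ, ∃ m : ℕ, bk n f α hα 0 + j ≤ bk n f α hα m := by
    intro j
    induction j with
    | zero => exact ⟨0, by simp⟩
    | succ j ih =>
      obtain ⟨m, hm⟩ := ih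
      obtain ⟨m', hmm', hne⟩ := hbad m
      have hlt : bk n f α hα m < bk n f α hα m' :=
        lt_of_le_of_ne (bk_mono_m hf hα hmm') (Ne.symm hne)
      refine ⟨m', ?_⟩
      have : bk n f α hα 0 + j + 1 ≤ bk n f α hα m' := by
        rw [Order.add_one_le_iff]
        exact lt_of_le_of_lt hm hlt
      calc bk n f α hα 0 + (↑(j + 1) : Ordinal) = bk n f α hα 0 + j + 1 := by
            push_cast; rw [add_assoc]
        _ ≤ bk n f α hα m' := this
  rw [Ordinal.add_le_iff_of_isSuccLimit isSuccLimit_omega0]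
  intro c hc
  obtain ⟨j, rfl⟩ := lt_omega0.1 hc
  obtain ⟨m, hm⟩ := step j
  refine hm.trans ?_
  refine omega_div_mono (Subtype.coe_le_coe.2 (hf ?_).le)
  refine Subtype.mk_lt_mk.2 ?_
  calc ω * α + (m : Ordinal) < ω * α + ω := add_lt_add_right (nat_lt_omega0 m) _
    _ ≤ y.1 := hy

end

private lemma lt_omega_mul (k : ℕ) (d : Ordinal) (hd : d ≠ 0) (h : d < ω ^ k) : d < ω * d := by
  induction k with
  | zero =>
    simp only [pow_zero, Ordinal.lt_one_iff_zero] at h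
    exact absurd h hd
  | succ k ih =>
    rcases lt_or_ge d (ω ^ k) with h' | h'
    · exact ih h'
    · calc d < ω ^ (k + 1) := h
        _ = ω * ω ^ k := pow_succ' ω k
        _ ≤ ω * d := mul_le_mul_right h' ω

/-- Let `f` be an order-embedding of a chain of order type `ω^{n+1}` into itself that
is not the identity, and let `(C_α)_{α<ω^n}` be its decomposition into consecutive
intervals of order type `ω`. Then there are `α ≤ β < ω^n` such that `f` is not the
identity on `C_α`, `f(C_α) \ C_β` is finite, and `f(C_α) ⊆ C_α` when `α = β`. -/
theorem embedding_of_omega_pow_succ (n : ℕ)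
    (f : {x : Ordinal // x < ω ^ (n + 1 : ℕ)} → {x : Ordinal // x < ω ^ (n + 1 : ℕ)})
    (hf : StrictMono f) (hfid : f ≠ id) :
    ∃ α β : Ordinal, α ≤ β ∧ β < ω ^ (n : ℕ) ∧
      (∃ x ∈ Block n α, f x ≠ x) ∧
      (f '' Block n α \ Block n β).Finite ∧
      (α = β → f '' Block n α ⊆ Block n β) := by
  by_contra hcon
  obtain ⟨x0, hx0⟩ : ∃ x, f x ≠ x := Function.ne_iff.1 hfid
  have hbadall : ∀ (α : Ordinal) (hα : α < ω ^ n), (∃ x ∈ Block n α, f x ≠ x) →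
      ∀ K : ℕ, ∃ m, K ≤ m ∧ bk n f α hα m ≠ bk n f α hα K := by
    intro α hα hnid K
    by_contra h
    push_neg at h
    exact hcon (good_case hf hα K h hnid)
  have hα0 : x0.1 / ω < ω ^ n := blockidx_lt x0
  set α0 := x0.1 / ω with hα0def
  have hnid0 : ∃ x ∈ Block n α0, f x ≠ x := ⟨x0, mem_block_iff.2 rfl, hx0⟩
  cases n with
  | zero =>
    obtain ⟨m, _, hne⟩ := hbadall α0 hα0 hnid0 0
    have h1 : bk 0 f α0 hα0 m < 1 := by simpa using bk_lt hf hα0 m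
    have h2 : bk 0 f α0 hα0 0 < 1 := by simpa using bk_lt hf hα0 0
    rw [Ordinal.lt_one_iff_zero] at h1 h2
    exact hne (h1.trans h2.symm)
  | succ p =>
    have hpow : (ω : Ordinal) ^ p < ω ^ (p + 1) := by
      calc (ω : Ordinal) ^ p = ω ^ p * 1 := (mul_one _).symm
        _ < ω ^ p * ω := by
            refine mul_lt_mul_of_pos_left one_lt_omega0 ?_
            exact (pos_iff_ne_zero.2 (pow_ne_zero p omega0_ne_zero))
        _ = ω ^ (p + 1) := (pow_succ ω p).symm
    have addlt : ∀ δ : Ordinal, δ ≤ ω ^ p → α0 + δ < ω ^ (p + 1) := by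
      intro δ hδ
      obtain ⟨c, hc, hcc⟩ := (Ordinal.lt_mul_iff_of_isSuccLimit isSuccLimit_omega0).1
        (by rw [← pow_succ]; exact hα0)
      obtain ⟨m, rfl⟩ := lt_omega0.1 hc
      have hm1 : ((m : Ordinal) + 1) < ω := by exact_mod_cast nat_lt_omega0 (m + 1)
      calc α0 + δ ≤ α0 + ω ^ p := add_le_add_right hδ _
        _ ≤ ω ^ p * m + ω ^ p := add_le_add_left hcc.le _
        _ = ω ^ p * ((m : Ordinal) + 1) := (mul_add_one _ _).symm
        _ < ω ^ p * ω := mul_lt_mul_of_pos_left hm1 ((pos_iff_ne_zero.2 (pow_ne_zero p omega0_ne_zero)))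
        _ = ω ^ (p + 1) := (pow_succ ω p).symm
    have key : ∀ δ : Ordinal, ∀ hδ : δ ≤ ω ^ p,
        bk (p+1) f α0 hα0 0 + ω * δ ≤ bk (p+1) f (α0 + δ) (addlt δ hδ) 0 ∧
        (∃ x ∈ Block (p+1) (α0 + δ), f x ≠ x) := by
      intro δ
      induction δ using Ordinal.induction with
      | _ δ ih =>
        intro hδ
        have main : bk (p+1) f α0 hα0 0 + ω * δ ≤ bk (p+1) f (α0 + δ) (addlt δ hδ) 0 := by
          rcases Ordinal.zero_or_succ_or_isSuccLimit δ with rfl | ⟨δ', rfl⟩ | hlim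
          · have he : bk (p+1) f (α0 + 0) (addlt 0 hδ) 0 = bk (p+1) f α0 hα0 0 := by
              congr 1
              exact add_zero α0
            rw [he, mul_zero, add_zero]
          · -- successor case
            have hδ'le : δ' ≤ ω ^ p := le_of_lt (lt_of_lt_of_le (Order.lt_succ δ') hδ)
            obtain ⟨hg', hnid'⟩ := ih δ' (Order.lt_succ δ') hδ'le
            have hbad' := hbadall (α0 + δ') (addlt δ' hδ'le) hnid'
            set y := blkpt (p+1) (α0 + Order.succ δ') (addlt _ hδ) 0 with hy_def
            have hy : ω * (α0 + δ') + ω ≤ y.1 := by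
              show ω * (α0 + δ') + ω ≤ ω * (α0 + Order.succ δ') + ((0:ℕ) : Ordinal)
              rw [Nat.cast_zero, add_zero, Ordinal.add_succ, Ordinal.mul_succ]
            have hstep := bad_step hf (addlt δ' hδ'le) hbad' y hy
            calc bk (p+1) f α0 hα0 0 + ω * Order.succ δ'
                = (bk (p+1) f α0 hα0 0 + ω * δ') + ω := by
                  rw [Ordinal.mul_succ, add_assoc]
              _ ≤ bk (p+1) f (α0 + δ') (addlt δ' hδ'le) 0 + ω := add_le_add_left hg' _
              _ ≤ (f y).1 / ω := hstep
              _ = bk (p+1) f (α0 + Order.succ δ') (addlt _ hδ) 0 := rfl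
          · -- limit case
            rw [Ordinal.add_le_iff_of_isSuccLimit (Ordinal.isSuccLimit_mul_right omega0_pos hlim)]
            intro c hc
            obtain ⟨δ', hδ'δ, hcδ'⟩ := (Ordinal.lt_mul_iff_of_isSuccLimit hlim).1 hc
            have hδ'le : δ' ≤ ω ^ p := le_of_lt (lt_of_lt_of_le hδ'δ hδ)
            calc bk (p+1) f α0 hα0 0 + c
                ≤ bk (p+1) f α0 hα0 0 + ω * δ' := add_le_add_right hcδ'.le _
              _ ≤ bk (p+1) f (α0 + δ') (addlt δ' hδ'le) 0 := (ih δ' hδ'δ hδ'le).1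
              _ ≤ bk (p+1) f (α0 + δ) (addlt δ hδ) 0 :=
                  bk_mono_a hf _ _ (add_le_add_right hδ'δ.le α0) 0
        refine ⟨main, ?_⟩
        rcases eq_or_ne δ 0 with rfl | hδ0
        · rw [add_zero]; exact hnid0
        · refine ⟨blkpt (p+1) (α0 + δ) (addlt δ hδ) 0, blkpt_mem _ 0, ?_⟩
          intro heq
          have h1 : bk (p+1) f (α0 + δ) (addlt δ hδ) 0 = α0 + δ := by
            show (f (blkpt (p+1) (α0 + δ) (addlt δ hδ) 0)).1 / ω = α0 + δ
            rw [heq]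
            exact mem_block_iff.1 (blkpt_mem _ 0)
          have h2 : α0 + δ < bk (p+1) f (α0 + δ) (addlt δ hδ) 0 := by
            calc α0 + δ < α0 + ω * δ :=
                  add_lt_add_right (lt_omega_mul (p+1) δ hδ0 (lt_of_le_of_lt hδ hpow)) α0
              _ ≤ bk (p+1) f α0 hα0 0 + ω * δ := add_le_add_left (le_bk hf hα0 0) _
              _ ≤ _ := main
          exact absurd h1 (ne_of_gt h2)
    have hfin := (key (ω ^ p) le_rfl).1
    have hbig : ω ^ (p + 1) ≤ bk (p+1) f (α0 + ω ^ p) (addlt _ le_rfl) 0 := by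
      calc (ω : Ordinal) ^ (p + 1) = ω * ω ^ p := pow_succ' ω p
        _ ≤ bk (p+1) f α0 hα0 0 + ω * ω ^ p := le_add_self
        _ ≤ _ := hfin
    exact absurd (bk_lt hf (addlt _ le_rfl) 0) (not_lt.2 hbig)
end

section
/- If α is a countably infinite linear order type (not necessarily an ordinal) with ω·α ≤ α, and L = (ℕ, ≤_L) is a chain of order type α, then the bichain (ℕ, ≤, ≤_L) (where ≤ is the natural order on ℕ) is not embedding rigid: it admits an embedding into itself other than the identity. -/
/-- The weak lexicographic order of type `ω·α`, where `α` is the type of the linear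
order `L`: copies of `ω` indexed by `(ℕ, L)`. -/
def OmegaTimes (L : ℕ → ℕ → Prop) (p q : ℕ × ℕ) : Prop :=
  (L p.1 q.1 ∧ p.1 ≠ q.1) ∨ (p.1 = q.1 ∧ p.2 ≤ q.2)

/-- If `α` is a countably infinite order type with `ω·α ≤ α` and `L` is a chain of
order type `α` on `ℕ`, then the bichain `(ℕ, ≤, L)` is not embedding rigid. -/
theorem not_embedding_rigid_of_omega_mul_le (L : ℕ → ℕ → Prop) (hL : IsLinearOrder ℕ L)
    (hle : ∃ g : ℕ × ℕ → ℕ, Function.Injective g ∧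
      ∀ p q : ℕ × ℕ, OmegaTimes L p q ↔ L (g p) (g q)) :
    ∃ f : ℕ → ℕ, Function.Injective f ∧ (∀ x y : ℕ, x ≤ y ↔ f x ≤ f y) ∧
      (∀ x y : ℕ, L x y ↔ L (f x) (f y)) ∧ f ≠ id := by
  haveI := hL
  obtain ⟨g, hg, hgL⟩ := hle
  -- each column of g is unbounded
  have hex : ∀ n m : ℕ, ∃ k, m < g (n, k) := by
    intro n m
    have hinj : Function.Injective (fun k => g (n, k)) := by
      intro a b h
      have := hg h
      exact (Prod.mk.injEq _ _ _ _ ▸ this).2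
    obtain ⟨b, hb, hmb⟩ := (Set.infinite_range_of_injective hinj).exists_gt m
    obtain ⟨k, rfl⟩ := hb
    exact ⟨k, hmb⟩
  let c : ℕ → ℕ → ℕ := fun n m => (hex n m).choose
  have hc : ∀ n m, m < g (n, c n m) := fun n m => (hex n m).choose_spec
  let k : ℕ → ℕ := fun n => Nat.rec (c 0 0) (fun n kn => c (n + 1) (g (n, kn))) n
  let f : ℕ → ℕ := fun n => g (n, k n)
  have hsm : StrictMono f := by
    apply strictMono_nat_of_lt_succ
    intro n
    exact hc (n + 1) (g (n, k n))
  refine ⟨f, hsm.injective, fun x y => (hsm.le_iff_le).symm, ?_, ?_⟩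
  · intro x y
    rcases eq_or_ne x y with rfl | hxy
    · exact ⟨fun _ => refl_of L _, fun _ => refl_of L _⟩
    · have := hgL (x, k x) (y, k y)
      constructor
      · intro h
        exact this.mp (Or.inl ⟨h, hxy⟩)
      · intro h
        rcases this.mpr h with ⟨h1, _⟩ | ⟨h1, _⟩
        · exact h1
        · exact absurd h1 hxy
  · intro h
    have h0 : 0 < f 0 := hc 0 0
    have : f 0 = 0 := by rw [h]; rfl
    omega
end

section
/- For every countable order type α, if L₁ = (ℕ, ≤_{L₁}) and L₂ = (ℕ, ≤_{L₂}) are chains of order types α and ω·α respectively, then there is an embedding of the bichain (ℕ, ≤, ≤_{L₁}) into the bichain (ℕ, ≤, ≤_{L₂}), where ≤ is the natural order on ℕ. -/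
lemma exists_gt_aux (e : ℕ × ℕ ≃ ℕ) (x m : ℕ) : ∃ k, m < e (x, k) := by
  by_contra h
  push_neg at h
  let g : ℕ → Fin (m + 1) := fun k => ⟨e (x, k), Nat.lt_succ_of_le (h k)⟩
  obtain ⟨a, b, hab, heq⟩ := Finite.exists_ne_map_eq_of_infinite g
  apply hab
  have : e (x, a) = e (x, b) := congrArg Fin.val heq
  have := e.injective this
  exact (Prod.mk.injEq _ _ _ _ ▸ this).2

/-- Recursive choice of a strictly increasing transversal. -/
def auxF (e : ℕ × ℕ ≃ ℕ) : ℕ → ℕ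
  | 0 => e (0, 0)
  | n + 1 => e (n + 1, Nat.find (exists_gt_aux e (n + 1) (auxF e n)))

lemma auxF_strictMono (e : ℕ × ℕ ≃ ℕ) : StrictMono (auxF e) := by
  apply strictMono_nat_of_lt_succ
  intro n
  exact Nat.find_spec (exists_gt_aux e (n + 1) (auxF e n))

lemma auxF_fst (e : ℕ × ℕ ≃ ℕ) (n : ℕ) : ∃ a, auxF e n = e (n, a) := by
  cases n with
  | zero => exact ⟨0, rfl⟩
  | succ m => exact ⟨_, rfl⟩

/-- If `L₁` and `L₂` are chains on `ℕ` of order types `α` and `ω·α` respectively, then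
the bichain `(ℕ, ≤, L₁)` embeds into the bichain `(ℕ, ≤, L₂)`. -/
theorem bichain_embeds_into_omega_mul (L₁ L₂ : ℕ → ℕ → Prop)
    (hL₁ : IsLinearOrder ℕ L₁) (hL₂ : IsLinearOrder ℕ L₂)
    (hiso : ∃ e : ℕ × ℕ ≃ ℕ, ∀ p q : ℕ × ℕ, OmegaTimes L₁ p q ↔ L₂ (e p) (e q)) :
    ∃ f : ℕ → ℕ, Function.Injective f ∧ (∀ x y : ℕ, x ≤ y ↔ f x ≤ f y) ∧
      ∀ x y : ℕ, L₁ x y ↔ L₂ (f x) (f y) := by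
  haveI := hL₁
  haveI := hL₂
  obtain ⟨e, he⟩ := hiso
  refine ⟨auxF e, (auxF_strictMono e).injective, fun x y => ((auxF_strictMono e).le_iff_le).symm,
    fun x y => ?_⟩
  obtain ⟨a, ha⟩ := auxF_fst e x
  obtain ⟨b, hb⟩ := auxF_fst e y
  rw [ha, hb, ← he (x, a) (y, b)]
  by_cases hxy : x = y
  · subst hxy
    constructor
    · intro _; right; exact ⟨rfl, by
        -- need a ≤ a? no: second coords a and b with same first coord x
        have : e (x, a) = e (x, b) := ha ▸ hb
        exact le_of_eq (congrArg Prod.snd (e.injective this))⟩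
    · intro _; exact refl_of L₁ x

  · simp only [OmegaTimes, hxy, false_and, and_false, or_false]
    exact ⟨fun h => ⟨h, hxy⟩, fun h => h.1⟩
end

section
/- If an ordinal α is orthogonal to the ordinal ω, then ω·α > α; equivalently, if ω·α = α, then α is not orthogonal to ω. -/
open Ordinal

/-- `f` preserves the (weak) order associated with the strict order `r`. -/
def PreservesWeak {V : Type} (r : V → V → Prop) (f : V → V) : Prop :=
  ∀ x y, r x y → r (f x) (f y) ∨ f x = f y

/-- Two ordinals `α` and `β` are orthogonal if there are well-orders `r`, `s` of types
`α` and `β` on a common set `V` such that the only maps preserving both are the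
identity and the constant maps. -/
def OrthogonalOrd (α β : Ordinal) : Prop :=
  ∃ (V : Type) (r s : V → V → Prop) (wr : IsWellOrder V r) (ws : IsWellOrder V s),
    @Ordinal.type V r wr = α ∧ @Ordinal.type V s ws = β ∧
    ∀ f : V → V, PreservesWeak r f → PreservesWeak s f →
      f = id ∨ ∃ c, f = Function.const V c

/-- Key combinatorial lemma: if `r` is isomorphic to a lexicographic product of
`ω`-blocks indexed by an order `rA` that is itself isomorphic to `r`, and `s` has
type `ω`, then there is a nontrivial map preserving both orders. -/
lemma exists_nontrivial_endo {V A : Type} (r s : V → V → Prop) (rA : A → A → Prop)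
    (θ : r ≃r rA)
    (E : r ≃r Prod.Lex rA ((· < ·) : ℕ → ℕ → Prop))
    (ψ : s ≃r ((· < ·) : ℕ → ℕ → Prop)) :
    ∃ f : V → V, PreservesWeak r f ∧ PreservesWeak s f ∧ f ≠ id ∧
      ∀ c, f ≠ Function.const V c := by
  -- in every block we can find elements with arbitrarily large `ψ`-value
  have pick : ∀ (a : A) (N : ℕ), ∃ v : V, (E v).1 = a ∧ N < ψ v := by
    intro a N
    have hinj : Function.Injective (fun k : ℕ => ψ (E.symm (a, k))) := by
      intro k l hkl
      have h1 : E.symm (a, k) = E.symm (a, l) := ψ.injective hkl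
      have h2 : ((a, k) : A × ℕ) = (a, l) := E.symm.injective h1
      exact congrArg Prod.snd h2
    have hinf : (Set.range fun k : ℕ => ψ (E.symm (a, k))).Infinite :=
      Set.infinite_range_of_injective hinj
    obtain ⟨b, ⟨k, rfl⟩, hb⟩ := hinf.exists_gt N
    exact ⟨E.symm (a, k), by simp, hb⟩
  choose g hg1 hg2 using pick
  obtain ⟨G, hG0, hGs⟩ : ∃ G : ℕ → V, G 0 = g (θ (ψ.symm 0)) 0 ∧
      ∀ n, G (n + 1) = g (θ (ψ.symm (n + 1))) (max (n + 1) (ψ (G n))) :=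
    ⟨fun n => Nat.rec (g (θ (ψ.symm 0)) 0)
      (fun n ih => g (θ (ψ.symm (n + 1))) (max (n + 1) (ψ ih))) n, rfl, fun _ => rfl⟩
  have hblock : ∀ n, (E (G n)).1 = θ (ψ.symm n) := by
    intro n
    cases n with
    | zero => rw [hG0]; exact hg1 _ _
    | succ n => rw [hGs]; exact hg1 _ _
  have hgt : ∀ n, n < ψ (G n) := by
    intro n
    cases n with
    | zero => rw [hG0]; exact hg2 _ _
    | succ n =>
      rw [hGs]
      exact (le_max_left _ _).trans_lt (hg2 _ _)
  have hmono : StrictMono (fun n => ψ (G n)) := by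
    apply strictMono_nat_of_lt_succ
    intro n
    show ψ (G n) < ψ (G (n + 1))
    rw [hGs]
    exact (le_max_right (n + 1) (ψ (G n))).trans_lt (hg2 _ _)
  have hfs : ∀ n, G (ψ (ψ.symm n)) = G n := by
    intro n; rw [ψ.apply_symm_apply]
  refine ⟨fun x => G (ψ x), ?_, ?_, ?_, ?_⟩
  · -- preserves r
    intro x y hxy
    left
    rw [← E.map_rel_iff]
    rw [Prod.lex_def]
    left
    rw [hblock, hblock, ψ.symm_apply_apply, ψ.symm_apply_apply]
    exact θ.map_rel_iff.2 hxy
  · -- preserves s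
    intro x y hxy
    left
    exact ψ.map_rel_iff.1 (hmono (ψ.map_rel_iff.2 hxy))
  · -- not the identity
    intro hid
    have h0 : G (ψ (ψ.symm 0)) = ψ.symm 0 := congrFun hid (ψ.symm 0)
    rw [hfs] at h0
    have := hgt 0
    rw [h0, ψ.apply_symm_apply] at this
    exact lt_irrefl 0 this
  · -- not constant
    intro c hc
    have h0 : G (ψ (ψ.symm 0)) = c := congrFun hc (ψ.symm 0)
    have h1 : G (ψ (ψ.symm 1)) = c := congrFun hc (ψ.symm 1)
    rw [hfs] at h0 h1
    have : ψ (G 0) < ψ (G 1) := hmono Nat.zero_lt_one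
    rw [h0, h1] at this
    exact lt_irrefl _ this

/-- If an ordinal `α` is orthogonal to `ω`, then `ω·α > α`. -/
theorem lt_omega_mul_of_orthogonal_omega (α : Ordinal) (h : OrthogonalOrd α ω) :
    α < ω * α := by
  by_contra hlt
  have hle : ω * α ≤ α := not_lt.mp hlt
  have heq : ω * α = α := le_antisymm hle (Ordinal.le_mul_right α Ordinal.omega0_pos)
  obtain ⟨V, r, s, wr, ws, hrt, hst, hrig⟩ := h
  haveI := wr
  haveI := ws
  haveI hA : IsWellOrder α.ToType ((· < ·) : α.ToType → α.ToType → Prop) :=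
    @isWellOrder_lt _ _ _
  haveI : IsWellOrder (α.ToType × ℕ)
      (Prod.Lex ((· < ·) : α.ToType → α.ToType → Prop) ((· < ·) : ℕ → ℕ → Prop)) :=
    inferInstance
  obtain ⟨ψ⟩ : Nonempty (s ≃r ((· < ·) : ℕ → ℕ → Prop)) := by
    refine Ordinal.type_eq.mp ?_
    rw [hst, type_nat_lt]
  obtain ⟨θ⟩ : Nonempty (r ≃r ((· < ·) : α.ToType → α.ToType → Prop)) := by
    refine Ordinal.type_eq.mp ?_
    rw [hrt, type_toType]
  obtain ⟨E⟩ : Nonempty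
      (r ≃r Prod.Lex ((· < ·) : α.ToType → α.ToType → Prop) ((· < ·) : ℕ → ℕ → Prop)) := by
    refine Ordinal.type_eq.mp ?_
    rw [type_prod_lex, type_nat_lt, type_toType, hrt, heq]
  obtain ⟨f, hf1, hf2, hfid, hfc⟩ := exists_nontrivial_endo r s _ θ E ψ
  rcases hrig f hf1 hf2 with h' | ⟨c, h'⟩
  · exact hfid h'
  · exact hfc c h'
end
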